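/- Let n ≥ 2 and let φ : ℤ[z_1,…,z_{2n-1}] → ℤ[u_2, u_3, …, u_{2n}] be the ring homomorphism determined by φ(z_j) = u_{2j+1} for 1 ≤ j ≤ n-1, φ(z_n) = u_2 + Σ_{i=1}^{n-1} u_{2i+1} u_{2i+2}, and φ(z_j) = -u_{2(2n+1-j)} for n+1 ≤ j ≤ 2n-1. Then for every 1 ≤ α ≤ n, φ(z_n + Σ_{k=1}^{α-1} z_{n-k} z_{n+k}) = u_2 + Σ_{i=1}^{n-α} u_{2i+1} u_{2i+2}. (The pullback computation via the chart map c_1 in the proof of Proposition 5.) -/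

import Mathlib

open MvPolynomial

/-- pullback along the chart map `c_1` in the proof of Proposition 5:
let `φ : ℤ[z_1,…,z_{2n-1}] → ℤ[u_2,…,u_{2n}]` be the ring homomorphism with
`φ(z_j) = u_{2j+1}` for `1 ≤ j ≤ n-1`, `φ(z_n) = u_2 + Σ_{i=1}^{n-1} u_{2i+1} u_{2i+2}`
and `φ(z_j) = -u_{2(2n+1-j)}` for `n+1 ≤ j ≤ 2n-1` (here both the `z`-variables and
the `u`-variables are realized as the variables `X j` of `MvPolynomial ℕ ℤ`, indexed
by their subscripts). Then for every `1 ≤ α ≤ n`,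
`φ(z_n + Σ_{k=1}^{α-1} z_{n-k} z_{n+k}) = u_2 + Σ_{i=1}^{n-α} u_{2i+1} u_{2i+2}`. -/
theorem pullback_chartC1 (n : ℕ) (hn : 2 ≤ n) (α : ℕ) (hα1 : 1 ≤ α) (hαn : α ≤ n) :
    let f : ℕ → MvPolynomial ℕ ℤ := fun j =>
      if 1 ≤ j ∧ j ≤ n - 1 then X (2 * j + 1)
      else if j = n then
        X 2 + ∑ i ∈ Finset.Icc 1 (n - 1), X (2 * i + 1) * X (2 * i + 2)
      else if n + 1 ≤ j ∧ j ≤ 2 * n - 1 then -X (2 * (2 * n + 1 - j))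
      else 0
    MvPolynomial.aeval (R := ℤ) f
        (X n + ∑ k ∈ Finset.Icc 1 (α - 1), X (n - k) * X (n + k)) =
      X 2 + ∑ i ∈ Finset.Icc 1 (n - α), X (2 * i + 1) * X (2 * i + 2) := by

  intro f
  rw [map_add]
  have hfn : MvPolynomial.aeval (R := ℤ) f (X n) =
      X 2 + ∑ i ∈ Finset.Icc 1 (n - 1), X (2 * i + 1) * X (2 * i + 2) := by
    rw [aeval_X]
    show (if 1 ≤ n ∧ n ≤ n - 1 then _ else _) = _
    rw [if_neg (by omega), if_pos rfl]
  have hterm : ∀ k ∈ Finset.Icc 1 (α - 1),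
      MvPolynomial.aeval (R := ℤ) f (X (n - k) * X (n + k)) =
        -(X (2 * (n - k) + 1) * X (2 * (n - k) + 2)) := by
    intro k hk
    rw [Finset.mem_Icc] at hk
    rw [map_mul, aeval_X, aeval_X]
    show (if 1 ≤ n - k ∧ n - k ≤ n - 1 then (X (2 * (n - k) + 1) : MvPolynomial ℕ ℤ)
      else _) * (if 1 ≤ n + k ∧ n + k ≤ n - 1 then _ else _) = _
    rw [if_pos (by omega), if_neg (by omega), if_neg (by omega), if_pos (by omega)]
    have h2 : 2 * (2 * n + 1 - (n + k)) = 2 * (n - k) + 2 := by omega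
    rw [h2]
    ring
  rw [map_sum, Finset.sum_congr rfl hterm, Finset.sum_neg_distrib, hfn]
  have hre : ∑ k ∈ Finset.Icc 1 (α - 1),
      (X (2 * (n - k) + 1) * X (2 * (n - k) + 2) : MvPolynomial ℕ ℤ) =
      ∑ i ∈ Finset.Ioc (n - α) (n - 1), X (2 * i + 1) * X (2 * i + 2) := by
    apply Finset.sum_nbij' (i := fun k => n - k) (j := fun i => n - i)
    · intro k hk; rw [Finset.mem_Icc] at hk; rw [Finset.mem_Ioc]; omega
    · intro i hi; rw [Finset.mem_Ioc] at hi; rw [Finset.mem_Icc]; omega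
    · intro k hk; rw [Finset.mem_Icc] at hk; omega
    · intro i hi; rw [Finset.mem_Ioc] at hi; omega
    · intro k hk; rfl
  rw [hre]
  have hsplit : ∑ i ∈ Finset.Icc 1 (n - 1),
      (X (2 * i + 1) * X (2 * i + 2) : MvPolynomial ℕ ℤ) =
      (∑ i ∈ Finset.Icc 1 (n - α), X (2 * i + 1) * X (2 * i + 2)) +
      ∑ i ∈ Finset.Ioc (n - α) (n - 1), X (2 * i + 1) * X (2 * i + 2) := by
    rw [show ∀ b : ℕ, Finset.Icc 1 b = Finset.Ioc 0 b from fun b => Finset.Icc_add_one_left_eq_Ioc (a := 0) (b := b)]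
    exact (Finset.sum_Ioc_consecutive _ (m := 0) (n := n - α) (k := n - 1) (by omega) (by omega)).symm
  rw [hsplit]
  abel
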